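/- Let f : ℝ → ℝ and suppose there exist constants 0 < h ≤ M with h ≤ f(y) ≤ M for all y ∈ [x₀, x₁]. Let x : [0,τ] → ℝ be a Carathéodory solution of ẋ = f(x), x(0) = x₀ with x(t) ∈ [x₀, x₁] for all t ∈ [0,τ]. Then x is strictly increasing on [0,τ] and satisfies the solution formula ∫_{x₀}^{x(t)} 1/f(y) dy = t for all t ∈ [0,τ]. In particular the solution with values in [x₀,x₁] is unique. -/

import Mathlib

open MeasureTheory Set Filter Topology



private lemma sol_integrable
    (f : ℝ → ℝ) (x₀ x₁ h M : ℝ) (hh : 0 < h) (hM : h ≤ M)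
    (hf : ∀ y ∈ Set.Icc x₀ x₁, h ≤ f y ∧ f y ≤ M)
    (τ : ℝ) (hτ : 0 ≤ τ) (x : ℝ → ℝ)
    (hrange : ∀ t ∈ Set.Icc (0:ℝ) τ, x t ∈ Set.Icc x₀ x₁)
    (hsol : ∀ t ∈ Set.Icc (0:ℝ) τ, x t = x₀ + ∫ s in (0:ℝ)..t, f (x s)) :
    IntegrableOn (fun s => f (x s)) (Set.Ioc 0 τ) volume := by
  set g : ℝ → ℝ := fun s => f (x s) with hg
  have hgb : ∀ s ∈ Set.Icc (0:ℝ) τ, h ≤ g s ∧ g s ≤ M := fun s hs => hf _ (hrange s hs)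
  have bound_int : ∀ {t : ℝ}, t ∈ Set.Icc (0:ℝ) τ →
      AEStronglyMeasurable g (volume.restrict (Set.Ioc 0 t)) →
      IntegrableOn g (Set.Ioc 0 t) volume := by
    intro t ht hm
    refine Integrable.mono' (g := fun _ => M) ?_ hm ?_
    · exact (integrableOn_const_iff).2 (Or.inr measure_Ioc_lt_top)
    · rw [ae_restrict_iff' measurableSet_Ioc]
      refine ae_of_all _ fun s hs => ?_
      have hs' := hgb s ⟨hs.1.le, hs.2.trans ht.2⟩
      rw [Real.norm_eq_abs, abs_of_pos (lt_of_lt_of_le hh hs'.1)]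
      exact hs'.2
  set S : Set ℝ := {t | t ∈ Set.Icc (0:ℝ) τ ∧ IntegrableOn g (Set.Ioc 0 t) volume} with hSdef
  have hS0 : (0:ℝ) ∈ S := by
    refine ⟨⟨le_refl 0, hτ⟩, ?_⟩
    simp [IntegrableOn]
  have hSne : S.Nonempty := ⟨0, hS0⟩
  have hSbdd : BddAbove S := ⟨τ, fun t ht => ht.1.2⟩
  set b := sSup S with hbdef
  have hb0 : 0 ≤ b := le_csSup hSbdd hS0
  have hbτ : b ≤ τ := csSup_le hSne fun t ht => ht.1.2
  have hlt : ∀ t, 0 ≤ t → t < b → IntegrableOn g (Set.Ioc 0 t) volume := by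
    intro t ht0 htb
    obtain ⟨s, hsS, hts⟩ := exists_lt_of_lt_csSup hSne htb
    exact hsS.2.mono_set (Set.Ioc_subset_Ioc le_rfl hts.le)
  have hbmem : IntegrableOn g (Set.Ioc 0 b) volume := by
    rcases eq_or_lt_of_le hb0 with hb | hb
    · rw [← hb]; simp [IntegrableOn]
    · have hcover : Set.Ioo 0 b ⊆ ⋃ n : ℕ, Set.Ioc 0 (b - b / (n + 1)) := by
        intro y hy
        obtain ⟨n, hn⟩ := exists_nat_gt (b / (b - y))
        have hby : 0 < b - y := sub_pos.2 hy.2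
        have hn1 : (0:ℝ) < n + 1 := by positivity
        have : b / (n + 1) ≤ b - y := by
          rw [div_le_iff₀ hn1]
          rw [div_lt_iff₀ hby] at hn
          nlinarith
        exact Set.mem_iUnion.2 ⟨n, hy.1, by linarith⟩
      have hmeasn : ∀ n : ℕ, AEStronglyMeasurable g
          (volume.restrict (Set.Ioc 0 (b - b / (n + 1)))) := by
        intro n
        have hn1 : (0:ℝ) < n + 1 := by positivity
        have h1 : 0 < b / (n+1) := by positivity
        have h2 : b / (n+1) ≤ b := by
          rw [div_le_iff₀ hn1]; nlinarith
        exact (hlt _ (by linarith) (by linarith)).aestronglyMeasurable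
      have hUnion : AEStronglyMeasurable g
          (volume.restrict (⋃ n : ℕ, Set.Ioc 0 (b - b / (n + 1)))) :=
        aestronglyMeasurable_iUnion_iff.mpr hmeasn
      have hm1 : AEStronglyMeasurable g (volume.restrict (Set.Ioo 0 b)) :=
        hUnion.mono_measure (Measure.restrict_mono hcover le_rfl)
      have hm2 : AEStronglyMeasurable g (volume.restrict (Set.Ioc 0 b)) := by
        rwa [Measure.restrict_congr_set Ioo_ae_eq_Ioc] at hm1
      exact bound_int ⟨hb0, hbτ⟩ hm2
  have hbτeq : b = τ := by
    by_contra hne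
    have hblt : b < τ := lt_of_le_of_ne hbτ hne
    have hxconst : ∀ t, b < t → t ≤ τ → x t = x₀ := by
      intro t hbt htτ
      have ht0 : 0 ≤ t := le_trans hb0 hbt.le
      have htS : t ∉ S := fun hmem => absurd (le_csSup hSbdd hmem) (not_le.mpr hbt)
      have hni : ¬ IntervalIntegrable g volume 0 t := by
        rw [intervalIntegrable_iff_integrableOn_Ioc_of_le ht0]
        exact fun hi => htS ⟨⟨ht0, htτ⟩, hi⟩
      rw [hsol t ⟨ht0, htτ⟩, intervalIntegral.integral_undef hni, add_zero]
    have hgc : ∀ t ∈ Set.Ioc b τ, g t = f x₀ := by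
      intro t ht
      simp only [hg, hxconst t ht.1 ht.2]
    have hm3 : AEStronglyMeasurable g (volume.restrict (Set.Ioc b τ)) := by
      refine (aestronglyMeasurable_const (b := f x₀)).congr ?_
      rw [Filter.EventuallyEq, ae_restrict_iff' measurableSet_Ioc]
      exact ae_of_all _ fun t ht => (hgc t ht).symm
    have hm4 : AEStronglyMeasurable g (volume.restrict (Set.Ioc 0 τ)) := by
      rw [← Set.Ioc_union_Ioc_eq_Ioc hb0 hbτ]
      exact aestronglyMeasurable_union_iff.mpr ⟨hbmem.aestronglyMeasurable, hm3⟩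
    have : τ ∈ S := ⟨⟨hτ, le_refl τ⟩, bound_int ⟨hτ, le_refl τ⟩ hm4⟩
    exact absurd (le_csSup hSbdd this) (not_le.mpr hblt)
  rw [← hbτeq]; exact hbmem


private lemma ae_hasDerivAt_intervalIntegral (G : ℝ → ℝ) (hG : Integrable G volume) :
    ∀ᵐ u : ℝ, HasDerivAt (fun t => ∫ s in (0:ℝ)..t, G s) (G u) u := by
  have hloc : LocallyIntegrable G volume := hG.locallyIntegrable
  filter_upwards [IsUnifLocDoublingMeasure.ae_tendsto_average_norm_sub volume hloc 1] with u hu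
  rw [hasDerivAt_iff_isLittleO, Asymptotics.isLittleO_iff]
  intro c hc
  have H : Tendsto (fun v : ℝ =>
      ⨍ y in Metric.closedBall ((u + v) / 2) (|v - u| / 2), ‖G y - G u‖) (𝓝[≠] u) (𝓝 0) := by
    refine hu (fun v => (u + v) / 2) (fun v => |v - u| / 2) ?_ ?_
    · rw [tendsto_nhdsWithin_iff]
      constructor
      · have h1 : Continuous (fun v : ℝ => |v - u| / 2) :=
          (continuous_abs.comp (continuous_id.sub continuous_const)).div_const 2
        exact (h1.tendsto' u 0 (by simp)).mono_left nhdsWithin_le_nhds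
      · filter_upwards [self_mem_nhdsWithin] with v hv
        have hvu : v ≠ u := hv
        have : 0 < |v - u| := abs_pos.2 (sub_ne_zero.2 hvu)
        exact Set.mem_Ioi.2 (by linarith)
    · refine Filter.Eventually.of_forall fun v => ?_
      rw [Metric.mem_closedBall, Real.dist_eq, one_mul]
      have h1 : u - (u + v) / 2 = (u - v) / 2 := by ring
      rw [h1, abs_div, abs_two, abs_sub_comm u v]
  have key : ∀ᶠ v in 𝓝[≠] u,
      ‖(∫ s in (0:ℝ)..v, G s) - (∫ s in (0:ℝ)..u, G s) - (v - u) • G u‖ ≤ c * ‖v - u‖ := by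
    filter_upwards [H.eventually (gt_mem_nhds hc), self_mem_nhdsWithin] with v hv hvne
    have hvu : v ≠ u := hvne
    have habs : 0 < |v - u| := abs_pos.2 (sub_ne_zero.2 hvu)
    set B := Metric.closedBall ((u + v) / 2) (|v - u| / 2) with hB
    have hint : IntervalIntegrable G volume u v := hG.intervalIntegrable
    have e1 : (∫ s in (0:ℝ)..v, G s) - (∫ s in (0:ℝ)..u, G s) = ∫ s in u..v, G s :=
      intervalIntegral.integral_interval_sub_left hG.intervalIntegrable hG.intervalIntegrable
    have e2 : (∫ s in u..v, G s) - (v - u) • G u = ∫ s in u..v, (G s - G u) := by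
      rw [intervalIntegral.integral_sub hint intervalIntegrable_const,
        intervalIntegral.integral_const]
    have hsub : Set.uIoc u v ⊆ B := by
      intro s hs
      rw [hB, Real.closedBall_eq_Icc]
      rcases le_total u v with huv | huv
      · rw [Set.uIoc_of_le huv] at hs
        have : |v - u| = v - u := abs_of_nonneg (by linarith)
        constructor <;> [skip; skip] <;> rw [this] <;>
          [linarith [hs.1]; linarith [hs.2]]
      · rw [Set.uIoc_of_ge huv] at hs
        have : |v - u| = u - v := by rw [abs_of_nonpos (by linarith : v - u ≤ 0), neg_sub]
        constructor <;> [skip; skip] <;> rw [this] <;>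
          [linarith [hs.1]; linarith [hs.2]]
    have hintB : IntegrableOn (fun s => ‖G s - G u‖) B volume := by
      have h1 : IntegrableOn (fun s => G s - G u) B volume :=
        hG.integrableOn.sub ((integrableOn_const_iff).2 (Or.inr measure_closedBall_lt_top))
      exact h1.norm
    have hm : (volume B).toReal = |v - u| := by
      rw [hB, Real.volume_closedBall, ENNReal.toReal_ofReal (by positivity)]
      ring
    set A := ∫ y in B, ‖G y - G u‖ with hA
    have havg : (⨍ y in B, ‖G y - G u‖) = |v - u|⁻¹ * A := by
      rw [setAverage_eq, measureReal_def, hm, smul_eq_mul]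
    rw [havg] at hv
    have hAle : A < c * |v - u| := by
      have hA' : A = |v - u| * (|v - u|⁻¹ * A) := by field_simp
      nlinarith
    calc ‖(∫ s in (0:ℝ)..v, G s) - (∫ s in (0:ℝ)..u, G s) - (v - u) • G u‖
        = ‖∫ s in u..v, (G s - G u)‖ := by rw [e1, e2]
      _ ≤ ∫ s in Set.uIoc u v, ‖G s - G u‖ :=
          intervalIntegral.norm_integral_le_integral_norm_uIoc
      _ ≤ A := setIntegral_mono_set hintB (ae_of_all _ fun s => norm_nonneg _)
          (HasSubset.Subset.eventuallyLE hsub)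
      _ ≤ c * |v - u| := hAle.le
      _ = c * ‖v - u‖ := by rw [Real.norm_eq_abs]
  rw [← nhdsNE_sup_pure u, eventually_sup]
  refine ⟨key, ?_⟩
  rw [eventually_pure]
  simp


private lemma sol_key (f : ℝ → ℝ) (x₀ x₁ h M : ℝ) (τ : ℝ) (x : ℝ → ℝ)
    (hh : 0 < h) (hM : h ≤ M)
    (hf : ∀ y ∈ Set.Icc x₀ x₁, h ≤ f y ∧ f y ≤ M)
    (hτ : 0 ≤ τ)
    (hrange : ∀ t ∈ Set.Icc (0:ℝ) τ, x t ∈ Set.Icc x₀ x₁)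
    (hsol : ∀ t ∈ Set.Icc (0:ℝ) τ, x t = x₀ + ∫ s in (0:ℝ)..t, f (x s)) :
    StrictMonoOn x (Set.Icc 0 τ) ∧
    ∀ t ∈ Set.Icc (0:ℝ) τ,
      IntegrableOn (fun y => (f y)⁻¹) (Set.Ioc x₀ (x t)) volume ∧
      (∫ y in x₀..(x t), (f y)⁻¹) = t := by
  have hInt : IntegrableOn (fun s => f (x s)) (Set.Ioc 0 τ) volume :=
    sol_integrable f x₀ x₁ h M hh hM hf τ hτ x hrange hsol
  have hD : ∀ G : ℝ → ℝ, Integrable G volume →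
      ∀ᵐ u : ℝ, HasDerivAt (fun t => ∫ s in (0:ℝ)..t, G s) (G u) u :=
    ae_hasDerivAt_intervalIntegral
  have hM0 : 0 < M := lt_of_lt_of_le hh hM
  set g : ℝ → ℝ := fun s => f (x s) with hgdef
  have hgb : ∀ s ∈ Set.Icc (0:ℝ) τ, h ≤ g s ∧ g s ≤ M := fun s hs => hf _ (hrange s hs)
  have hIntc : IntegrableOn g (Set.Icc 0 τ) volume := by
    rwa [IntegrableOn, ← Measure.restrict_congr_set Ioc_ae_eq_Icc]
  set G : ℝ → ℝ := Set.indicator (Set.Icc 0 τ) g with hGdef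
  have hGint : Integrable G volume := (integrable_indicator_iff measurableSet_Icc).2 hIntc
  set X : ℝ → ℝ := fun t => x₀ + ∫ s in (0:ℝ)..t, G s with hXdef
  have hGeq : ∀ u ∈ Set.Icc (0:ℝ) τ, G u = g u := fun u hu => Set.indicator_of_mem hu g
  have hGbound : ∀ u : ℝ, ‖G u‖ ≤ M := by
    intro u
    by_cases hu : u ∈ Set.Icc (0:ℝ) τ
    · rw [hGdef, Set.indicator_of_mem hu, Real.norm_eq_abs,
        abs_of_pos (lt_of_lt_of_le hh (hgb u hu).1)]
      exact (hgb u hu).2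
    · rw [hGdef, Set.indicator_of_notMem hu, norm_zero]; exact hM0.le
  -- X = x on [0, τ]
  have hXeq : ∀ t ∈ Set.Icc (0:ℝ) τ, X t = x t := by
    intro t ht
    have h1 : (∫ s in (0:ℝ)..t, G s) = ∫ s in (0:ℝ)..t, g s := by
      rw [intervalIntegral.integral_of_le ht.1, intervalIntegral.integral_of_le ht.1]
      refine setIntegral_congr_fun measurableSet_Ioc fun s hs => ?_
      exact hGeq s ⟨hs.1.le, hs.2.trans ht.2⟩
    rw [hXdef]; dsimp only; rw [h1, ← hsol t ht]
  have hX0 : X 0 = x₀ := by rw [hXdef]; simp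
  -- increments
  have hincr : ∀ a ∈ Set.Icc (0:ℝ) τ, ∀ b ∈ Set.Icc (0:ℝ) τ, a ≤ b →
      h * (b - a) ≤ X b - X a ∧ X b - X a ≤ M * (b - a) := by
    intro a ha b hb hab
    have hXsub : X b - X a = ∫ s in a..b, G s := by
      rw [hXdef]; dsimp only
      rw [add_sub_add_left_eq_sub]
      exact intervalIntegral.integral_interval_sub_left hGint.intervalIntegrable
        hGint.intervalIntegrable
    have hsub : Set.Icc a b ⊆ Set.Icc (0:ℝ) τ := Set.Icc_subset_Icc ha.1 hb.2
    constructor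
    · have := intervalIntegral.integral_mono_on hab
        (intervalIntegrable_const (c := h)) hGint.intervalIntegrable
        (fun u hu => by rw [hGeq u (hsub hu)]; exact (hgb u (hsub hu)).1)
      rw [intervalIntegral.integral_const, smul_eq_mul] at this
      rw [hXsub]; linarith
    · have := intervalIntegral.integral_mono_on hab
        hGint.intervalIntegrable (intervalIntegrable_const (c := M))
        (fun u hu => by rw [hGeq u (hsub hu)]; exact (hgb u (hsub hu)).2)
      rw [intervalIntegral.integral_const, smul_eq_mul] at this
      rw [hXsub]; linarith
  have hXmono : StrictMonoOn X (Set.Icc 0 τ) := by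
    intro a ha b hb hab
    have := (hincr a ha b hb hab.le).1
    nlinarith
  have hxmono : StrictMonoOn x (Set.Icc 0 τ) := by
    intro a ha b hb hab
    rw [← hXeq a ha, ← hXeq b hb]
    exact hXmono ha hb hab
  refine ⟨hxmono, ?_⟩
  -- Lipschitz
  have hXlip : LipschitzWith (Real.toNNReal M) X := by
    refine LipschitzWith.of_dist_le_mul fun a b => ?_
    rw [Real.dist_eq, Real.dist_eq, Real.coe_toNNReal M hM0.le]
    have h1 : X a - X b = ∫ s in b..a, G s := by
      rw [hXdef]; dsimp only
      rw [add_sub_add_left_eq_sub]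
      exact intervalIntegral.integral_interval_sub_left hGint.intervalIntegrable
        hGint.intervalIntegrable
    rw [h1]
    have := intervalIntegral.norm_integral_le_of_norm_le_const
      (C := M) (a := b) (b := a) (f := G) (fun u _ => hGbound u)
    rwa [Real.norm_eq_abs] at this
  have hXcont : Continuous X := hXlip.continuous
  -- a.e. derivative
  have hae : ∀ᵐ u : ℝ, HasDerivAt X (G u) u := by
    filter_upwards [hD G hGint] with u hu
    exact hu.const_add x₀
  obtain ⟨N, hNsub, hNmeas, hNnull⟩ :=
    exists_measurable_superset_of_null (μ := volume)
      (s := {u : ℝ | ¬ HasDerivAt X (G u) u}) (by rwa [← ae_iff])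
  -- main step per t
  intro t ht
  set s : Set ℝ := Set.Ioc 0 t \ N with hsdef
  have hsmeas : MeasurableSet s := measurableSet_Ioc.diff hNmeas
  have hsubτ : Set.Ioc 0 t ⊆ Set.Icc (0:ℝ) τ := fun u hu => ⟨hu.1.le, hu.2.trans ht.2⟩
  have hderiv : ∀ u ∈ s, HasDerivWithinAt X (G u) s u := by
    intro u hu
    have : HasDerivAt X (G u) u := by
      by_contra hcon
      exact hu.2 (hNsub hcon)
    exact this.hasDerivWithinAt
  have hinj : Set.InjOn X s :=
    (hXmono.injOn).mono fun u hu => hsubτ hu.1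
  have hxt : x t ∈ Set.Icc x₀ x₁ := hrange t ht
  -- image of s is a.e. Ioc x₀ (x t)
  have himg_sub : X '' s ⊆ Set.Ioc x₀ (x t) := by
    rintro y ⟨u, hu, rfl⟩
    have hu' : u ∈ Set.Ioc 0 t := hu.1
    have huτ : u ∈ Set.Icc (0:ℝ) τ := hsubτ hu'
    constructor
    · rw [← hX0]
      exact hXmono ⟨le_refl 0, hτ⟩ huτ hu'.1
    · rw [← hXeq t ht]
      rcases eq_or_lt_of_le hu'.2 with he | hl
      · rw [he]
      · exact (hXmono huτ ht hl).le
  have hIVT : Set.Ioc (X 0) (X t) ⊆ X '' Set.Ioc 0 t :=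
    intermediate_value_Ioc ht.1 hXcont.continuousOn
  have hnull2 : volume (X '' N) = 0 := by
    have h1 := hXlip.hausdorffMeasure_image_le (zero_le_one (α := ℝ)) N
    rw [MeasureTheory.hausdorffMeasure_real] at h1
    rw [hNnull, mul_zero] at h1
    exact le_antisymm h1 (by simp)
  have himg_null : volume (Set.Ioc x₀ (x t) \ X '' s) = 0 := by
    refine measure_mono_null ?_ hnull2
    intro y hy
    have hy1 : y ∈ X '' Set.Ioc 0 t := by
      apply hIVT
      rw [hX0, hXeq t ht]
      exact hy.1
    obtain ⟨u, hu, rfl⟩ := hy1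
    refine ⟨u, ?_, rfl⟩
    by_contra hcon
    exact hy.2 ⟨u, ⟨hu, hcon⟩, rfl⟩
  have haeset : X '' s =ᵐ[volume] Set.Ioc x₀ (x t) := by
    rw [MeasureTheory.ae_eq_set]
    refine ⟨?_, himg_null⟩
    rw [Set.diff_eq_empty.2 himg_sub]
    exact measure_empty
  -- Jacobian change of variables
  have hone : Set.EqOn (fun u => |G u| • (f (X u))⁻¹) (fun _ => (1:ℝ)) s := by
    intro u hu
    have huτ : u ∈ Set.Icc (0:ℝ) τ := hsubτ hu.1
    have h1 : G u = g u := hGeq u huτ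
    have h2 : X u = x u := hXeq u huτ
    have h3 : 0 < g u := lt_of_lt_of_le hh (hgb u huτ).1
    simp only [h1, h2, smul_eq_mul]
    rw [abs_of_pos h3]
    exact mul_inv_cancel₀ h3.ne'
  have hvols : volume s = ENNReal.ofReal t := by
    rw [hsdef, measure_diff_null hNnull, Real.volume_Ioc, sub_zero]
  have hint_s : IntegrableOn (fun u => |G u| • (f (X u))⁻¹) s volume := by
    refine (integrableOn_congr_fun hone hsmeas).2 ?_
    refine (integrableOn_const_iff).2 (Or.inr ?_)
    rw [hvols]; exact ENNReal.ofReal_lt_top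
  have hint_img : IntegrableOn (fun y => (f y)⁻¹) (X '' s) volume :=
    (integrableOn_image_iff_integrableOn_abs_deriv_smul hsmeas hderiv hinj _).2 hint_s
  have hint_Ioc : IntegrableOn (fun y => (f y)⁻¹) (Set.Ioc x₀ (x t)) volume := by
    rwa [IntegrableOn, ← Measure.restrict_congr_set haeset]
  refine ⟨hint_Ioc, ?_⟩
  have hform : (∫ y in Set.Ioc x₀ (x t), (f y)⁻¹) = t := by
    rw [← setIntegral_congr_set haeset,
      integral_image_eq_integral_abs_deriv_smul hsmeas hderiv hinj,
      setIntegral_congr_fun hsmeas hone, setIntegral_const, measureReal_def, hvols, smul_eq_mul, mul_one,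
      ENNReal.toReal_ofReal ht.1]
  rw [intervalIntegral.integral_of_le hxt.1, hform]


/-- If `0 < h ≤ f ≤ M` on `[x₀, x₁]`, then any Carathéodory solution of
`ẋ = f(x)`, `x(0) = x₀` taking values in `[x₀, x₁]` is strictly increasing,
satisfies the solution formula `∫_{x₀}^{x(t)} 1/f(y) dy = t`, and is unique. -/
theorem solution_formula_and_uniqueness
    (f : ℝ → ℝ) (x₀ x₁ h M : ℝ) (hh : 0 < h) (hM : h ≤ M)
    (hf : ∀ y ∈ Set.Icc x₀ x₁, h ≤ f y ∧ f y ≤ M)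
    (τ : ℝ) (hτ : 0 ≤ τ) (x : ℝ → ℝ)
    (hrange : ∀ t ∈ Set.Icc (0:ℝ) τ, x t ∈ Set.Icc x₀ x₁)
    (hsol : ∀ t ∈ Set.Icc (0:ℝ) τ, x t = x₀ + ∫ s in (0:ℝ)..t, f (x s)) :
    StrictMonoOn x (Set.Icc 0 τ) ∧
    (∀ t ∈ Set.Icc (0:ℝ) τ, (∫ y in x₀..(x t), (f y)⁻¹) = t) ∧
    (∀ x' : ℝ → ℝ,
      (∀ t ∈ Set.Icc (0:ℝ) τ, x' t ∈ Set.Icc x₀ x₁) →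
      (∀ t ∈ Set.Icc (0:ℝ) τ, x' t = x₀ + ∫ s in (0:ℝ)..t, f (x' s)) →
      ∀ t ∈ Set.Icc (0:ℝ) τ, x' t = x t) := by
  have hM0 : 0 < M := lt_of_lt_of_le hh hM
  obtain ⟨hmono, hkey⟩ := sol_key f x₀ x₁ h M τ x hh hM hf hτ hrange hsol
  refine ⟨hmono, fun t ht => (hkey t ht).2, ?_⟩
  intro x' hrange' hsol' t ht
  obtain ⟨hmono', hkey'⟩ := sol_key f x₀ x₁ h M τ x' hh hM hf hτ hrange' hsol'
  obtain ⟨hI, hE⟩ := hkey t ht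
  obtain ⟨hI', hE'⟩ := hkey' t ht
  -- auxiliary strict monotonicity of the primitive of 1/f
  have aux : ∀ p q : ℝ, p ∈ Set.Icc x₀ x₁ → q ∈ Set.Icc x₀ x₁ →
      IntegrableOn (fun y => (f y)⁻¹) (Set.Ioc x₀ p) volume →
      IntegrableOn (fun y => (f y)⁻¹) (Set.Ioc x₀ q) volume →
      (∫ y in x₀..p, (f y)⁻¹) = (∫ y in x₀..q, (f y)⁻¹) → p < q → False := by
    intro p q hp hq hIp hIq heq hpq
    have hip : IntervalIntegrable (fun y => (f y)⁻¹) volume x₀ p :=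
      (intervalIntegrable_iff_integrableOn_Ioc_of_le hp.1).2 hIp
    have hiq : IntervalIntegrable (fun y => (f y)⁻¹) volume x₀ q :=
      (intervalIntegrable_iff_integrableOn_Ioc_of_le hq.1).2 hIq
    have hzero : (∫ y in p..q, (f y)⁻¹) = 0 := by
      rw [← intervalIntegral.integral_interval_sub_left hiq hip, heq, sub_self]
    have hipq : IntervalIntegrable (fun y => (f y)⁻¹) volume p q := by
      rw [intervalIntegrable_iff_integrableOn_Ioc_of_le hpq.le]
      exact hIq.mono_set (Set.Ioc_subset_Ioc hp.1 le_rfl)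
    have hlow : ∀ y ∈ Set.Icc p q, M⁻¹ ≤ (f y)⁻¹ := by
      intro y hy
      have hy' : y ∈ Set.Icc x₀ x₁ := ⟨hp.1.trans hy.1, hy.2.trans hq.2⟩
      have := hf y hy'
      have hfy : 0 < f y := lt_of_lt_of_le hh this.1
      exact inv_anti₀ hfy this.2
    have := intervalIntegral.integral_mono_on hpq.le
      (intervalIntegrable_const (c := M⁻¹)) hipq hlow
    rw [intervalIntegral.integral_const, smul_eq_mul, hzero] at this
    have h1 : 0 < (q - p) * M⁻¹ := mul_pos (by linarith) (inv_pos.2 hM0)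
    linarith
  rcases lt_trichotomy (x' t) (x t) with hlt | heq | hgt
  · exact absurd (aux (x' t) (x t) (hrange' t ht) (hrange t ht) hI' hI
      (by rw [hE, hE']) hlt) not_false
  · exact heq
  · exact absurd (aux (x t) (x' t) (hrange t ht) (hrange' t ht) hI hI'
      (by rw [hE, hE']) hgt) not_false
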